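/- Over a field F, the subset of pairs (g₁, g₂) ∈ F[x]_{≤p₁} × F[x]_{≤p₂} such that g₂ ≠ 0 and g₁ does not belong to the radical of the ideal (g₂) is Zariski open, and it is non-empty when p₂ ≥ 1. -/

import Mathlib

/-- The Zariski topology on the affine space `σ → F` over a field `F`. -/
def affineZariskiTopology (σ F : Type*) [Field F] : TopologicalSpace (σ → F) :=
  TopologicalSpace.generateFrom
    {U | ∃ S : Set (MvPolynomial σ F),
      Uᶜ = {c | ∀ p ∈ S, MvPolynomial.eval c p = 0}}

/-- The polynomial of degree `≤ p` with coefficient tuple `c : Fin (p+1) → F`. -/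
noncomputable def polyOfCoeffs {F : Type*} [Field F] {p : ℕ} (c : Fin (p + 1) → F) :
    Polynomial F :=
  ∑ i : Fin (p + 1), Polynomial.C (c i) * Polynomial.X ^ (i : ℕ)



open Matrix

lemma aux_exists_det_ne_zero {K : Type*} [Field K] {m n : Type*} [Fintype m] [Fintype n]
    [DecidableEq n] {M : Matrix m n K}
    (h : LinearIndependent K (fun j => Mᵀ j)) :
    ∃ r : n → m, (M.submatrix r id).det ≠ 0 := by
  classical
  have hrank : M.rank = Fintype.card n := by
    rw [← Matrix.rank_transpose]
    exact h.rank_matrix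
  have hspan : Submodule.span K (Set.range (fun i => M i)) = ⊤ := by
    apply Submodule.eq_top_of_finrank_eq
    change Module.finrank K (Submodule.span K (Set.range M.row)) = _
    rw [← Matrix.rank_eq_finrank_span_row, hrank, Module.finrank_fintype_fun_eq_card]
  obtain ⟨s, hs_sub, hs_span, hs_li⟩ := exists_linearIndependent K (Set.range (fun i => M i))
  rw [hspan] at hs_span
  have hsfin : s.Finite := (Set.finite_range _).subset hs_sub
  have : Fintype s := hsfin.fintype
  have hb : Module.Basis s K (n → K) := Module.Basis.mk hs_li (by rw [Subtype.range_coe, hs_span])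
  have hcard : Fintype.card s = Fintype.card n := by
    rw [← Module.finrank_fintype_fun_eq_card K (η := n), Module.finrank_eq_card_basis hb]
  obtain ⟨e⟩ : Nonempty (n ≃ s) := ⟨(Fintype.equivOfCardEq hcard).symm⟩
  have hr : ∀ j : n, ∃ i : m, M i = (e j : n → K) := by
    intro j
    obtain ⟨i, hi⟩ := hs_sub (e j).2
    exact ⟨i, hi⟩
  choose r hr using hr
  refine ⟨r, ?_⟩
  have hrows : LinearIndependent K (fun j => (M.submatrix r id) j) := by
    have : (fun j => (M.submatrix r id) j) = (fun j : n => ((e j : n → K))) := by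
      funext j; exact hr j
    rw [this]
    exact hs_li.comp (fun j => e j) (fun a b hab => e.injective (Subtype.ext_iff.mpr (by exact congrArg Subtype.val hab)))
  have := Matrix.linearIndependent_rows_iff_isUnit.mp hrows
  intro hdet
  rw [Matrix.isUnit_iff_isUnit_det] at this
  change IsUnit (M.submatrix r id).det at this
  rw [hdet] at this
  simpa using this

open Polynomial

noncomputable def auxPoly {R : Type*} [CommRing R] {n : ℕ} (c : Fin (n + 1) → R) : Polynomial R :=
  ∑ i : Fin (n + 1), Polynomial.C (c i) * Polynomial.X ^ (i : ℕ)

lemma auxPoly_natDegree_le {R : Type*} [CommRing R] {n : ℕ} (c : Fin (n + 1) → R) :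
    (auxPoly c).natDegree ≤ n := by
  refine (Polynomial.natDegree_sum_le _ _).trans ?_
  simp only [Finset.fold_max_le]
  refine ⟨Nat.zero_le _, fun i _ => ?_⟩
  exact (Polynomial.natDegree_C_mul_X_pow_le _ _).trans (Nat.lt_succ_iff.mp i.2)

lemma auxPoly_coeff {R : Type*} [CommRing R] {n : ℕ} (c : Fin (n + 1) → R) (k : Fin (n + 1)) :
    (auxPoly c).coeff (k : ℕ) = c k := by
  rw [auxPoly, Polynomial.finset_sum_coeff]
  rw [Finset.sum_eq_single k]
  · simp
  · intro i _ hik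
    simp only [Polynomial.coeff_C_mul, Polynomial.coeff_X_pow]
    rw [if_neg, mul_zero]
    exact fun h => hik (Fin.ext h.symm)
  · simp

lemma auxPoly_eq_self {R : Type*} [CommRing R] {n : ℕ} {q : Polynomial R}
    (hq : q.natDegree ≤ n) : auxPoly (fun i : Fin (n + 1) => q.coeff i) = q := by
  rw [auxPoly]
  conv_rhs => rw [q.as_sum_range' (n + 1) (Nat.lt_succ_of_le hq)]
  rw [Fin.sum_univ_eq_sum_range (fun i => Polynomial.C (q.coeff i) * Polynomial.X ^ i)]
  simp [Polynomial.C_mul_X_pow_eq_monomial]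

open Polynomial Matrix

noncomputable def divMat {R : Type*} [CommRing R] (N p₂ : ℕ) (g₂ h : Polynomial R) :
    Matrix (Fin (N + p₂ + 1)) (Fin (N + 2)) R :=
  fun i j => if (j : ℕ) < N + 1 then (Polynomial.X ^ (j : ℕ) * g₂).coeff i else h.coeff i

noncomputable def comboPoly {R : Type*} [CommRing R] (N p₂ : ℕ) (g₂ h : Polynomial R)
    (v : Fin (N + 2) → R) : Polynomial R :=
  ∑ j : Fin (N + 2), v j • (if (j : ℕ) < N + 1 then Polynomial.X ^ (j : ℕ) * g₂ else h)

lemma divMat_mulVec {R : Type*} [CommRing R] (N p₂ : ℕ) (g₂ h : Polynomial R)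
    (v : Fin (N + 2) → R) (i : Fin (N + p₂ + 1)) :
    (divMat N p₂ g₂ h).mulVec v i = (comboPoly N p₂ g₂ h v).coeff i := by
  rw [comboPoly, Polynomial.finset_sum_coeff, Matrix.mulVec, dotProduct]
  refine Finset.sum_congr rfl fun j _ => ?_
  rw [Polynomial.coeff_smul, smul_eq_mul, divMat]
  split_ifs <;> ring

lemma comboPoly_eq {R : Type*} [CommRing R] (N p₂ : ℕ) (g₂ h : Polynomial R)
    (v : Fin (N + 2) → R) :
    comboPoly N p₂ g₂ h v =
      (∑ j : Fin (N + 1), Polynomial.C (v j.castSucc) * Polynomial.X ^ (j : ℕ)) * g₂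
        + v (Fin.last (N + 1)) • h := by
  rw [comboPoly, Fin.sum_univ_castSucc]
  have hlast : ¬ ((Fin.last (N + 1) : Fin (N + 2)) : ℕ) < N + 1 := by simp
  rw [if_neg hlast, Finset.sum_mul]
  congr 1
  refine Finset.sum_congr rfl fun j _ => ?_
  have : ((j.castSucc : Fin (N + 2)) : ℕ) < N + 1 := by simp [j.2]
  rw [if_pos this, Polynomial.smul_eq_C_mul]
  simp [Fin.coe_castSucc]; ring

lemma comboPoly_natDegree_le {R : Type*} [CommRing R] (N p₂ : ℕ) {g₂ h : Polynomial R}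
    (hg₂ : g₂.natDegree ≤ p₂) (hh : h.natDegree ≤ N) (v : Fin (N + 2) → R) :
    (comboPoly N p₂ g₂ h v).natDegree ≤ N + p₂ := by
  refine (Polynomial.natDegree_sum_le _ _).trans ?_
  simp only [Finset.fold_max_le]
  refine ⟨Nat.zero_le _, fun j _ => ?_⟩
  refine (Polynomial.natDegree_smul_le _ _).trans ?_
  split_ifs with hj
  · refine (Polynomial.natDegree_mul_le).trans ?_
    have := Polynomial.natDegree_X_pow_le (R := R) (j : ℕ)
    omega
  · omega

lemma divMat_det_iff {F : Type*} [Field F] (N p₂ : ℕ) {g₂ h : Polynomial F}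
    (hg₂ : g₂.natDegree ≤ p₂) (hh : h.natDegree ≤ N) :
    (∀ r : Fin (N + 2) → Fin (N + p₂ + 1), ((divMat N p₂ g₂ h).submatrix r id).det = 0)
      ↔ (g₂ = 0 ∨ g₂ ∣ h) := by
  classical
  constructor
  · -- all minors vanish → conclusion, by contraposition via independent columns
    intro hdet
    by_contra hcon
    push_neg at hcon
    obtain ⟨hg0, hnd⟩ := hcon
    have hli : LinearIndependent F (fun j => (divMat N p₂ g₂ h)ᵀ j) := by
      rw [Fintype.linearIndependent_iff]
      intro v hv
      have hcoeff : ∀ i : Fin (N + p₂ + 1), (comboPoly N p₂ g₂ h v).coeff i = 0 := by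
        intro i
        rw [← divMat_mulVec]
        have := congrFun hv i
        simpa [Matrix.mulVec, dotProduct, mul_comm] using this
      have hP : comboPoly N p₂ g₂ h v = 0 := by
        ext k
        by_cases hk : k < N + p₂ + 1
        · exact hcoeff ⟨k, hk⟩
        · rw [Polynomial.coeff_eq_zero_of_natDegree_lt, Polynomial.coeff_zero]
          have := comboPoly_natDegree_le N p₂ hg₂ hh v
          omega
      rw [comboPoly_eq] at hP
      set q : Polynomial F := ∑ j : Fin (N + 1), Polynomial.C (v j.castSucc) * Polynomial.X ^ (j : ℕ) with hq
      set a := v (Fin.last (N + 1)) with ha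
      have hlast : a = 0 := by
        by_contra hv0
        apply hnd
        refine ⟨(-(a⁻¹)) • q, ?_⟩
        have h1 : Polynomial.C a ≠ 0 := fun hc => hv0 (by simpa using hc)
        have h2 : Polynomial.C a * Polynomial.C a⁻¹ = 1 := by
          rw [← Polynomial.C_mul, mul_inv_cancel₀ hv0, Polynomial.C_1]
        apply mul_left_cancel₀ h1
        rw [Polynomial.smul_eq_C_mul] at hP
        rw [Polynomial.smul_eq_C_mul, map_neg]
        linear_combination hP + (q * g₂) * h2
      rw [hlast, zero_smul, add_zero, mul_eq_zero] at hP
      have hqz : q = 0 := hP.resolve_right hg0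
      intro j
      refine Fin.lastCases hlast (fun k => ?_) j
      have hc := auxPoly_coeff (fun i : Fin (N + 1) => v i.castSucc) k
      rw [show auxPoly (fun i : Fin (N + 1) => v i.castSucc) = q from rfl, hqz] at hc
      simpa using hc.symm
    obtain ⟨r, hr⟩ := aux_exists_det_ne_zero hli
    exact hr (hdet r)
  · intro hcase r
    have hexists : ∃ v : Fin (N + 2) → F, v ≠ 0 ∧ (divMat N p₂ g₂ h).mulVec v = 0 := by
      rcases hcase with hz | ⟨q, hq⟩
      · refine ⟨Pi.single 0 1, ?_, ?_⟩
        · intro h0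
          have := congrFun h0 0
          simp at this
        · funext i
          simp [Matrix.mulVec_single, divMat, hz]
      · by_cases hh0 : h = 0
        · refine ⟨Pi.single (Fin.last (N + 1)) 1, ?_, ?_⟩
          · intro h0
            have := congrFun h0 (Fin.last (N + 1))
            simp at this
          · funext i
            have : ¬ ((Fin.last (N + 1) : Fin (N + 2)) : ℕ) < N + 1 := by simp
            simp [Matrix.mulVec_single, divMat, this, hh0]
        · have hg0 : g₂ ≠ 0 := by
            intro hz; rw [hz, zero_mul] at hq; exact hh0 hq
          have hq0 : q ≠ 0 := by
            intro hz; rw [hz, mul_zero] at hq; exact hh0 hq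
          have hqdeg : q.natDegree ≤ N := by
            have := Polynomial.natDegree_mul hg0 hq0
            rw [← hq] at this
            omega
          refine ⟨Fin.lastCases (-1) (fun j : Fin (N + 1) => q.coeff j), ?_, ?_⟩
          · intro h0
            have := congrFun h0 (Fin.last (N + 1))
            simp at this
          · funext i
            rw [divMat_mulVec, comboPoly_eq]
            have h1 : (∑ j : Fin (N + 1), Polynomial.C
                ((Fin.lastCases (motive := fun _ => F) (-1) (fun j : Fin (N + 1) => q.coeff j)) j.castSucc)
                * Polynomial.X ^ (j : ℕ)) = q := by
              rw [show (∑ j : Fin (N + 1), Polynomial.C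
                  ((Fin.lastCases (motive := fun _ => F) (-1) (fun j : Fin (N + 1) => q.coeff j)) j.castSucc)
                  * Polynomial.X ^ (j : ℕ)) = auxPoly (fun j : Fin (N + 1) => q.coeff j) from ?_]
              · exact auxPoly_eq_self hqdeg
              · refine Finset.sum_congr rfl fun j _ => ?_
                rw [Fin.lastCases_castSucc]
            rw [h1, Fin.lastCases_last, hq]
            simp [mul_comm]
    obtain ⟨v, hv0, hmv⟩ := hexists
    rw [← Matrix.exists_mulVec_eq_zero_iff]
    refine ⟨v, hv0, ?_⟩
    funext k
    have : ((divMat N p₂ g₂ h).submatrix r id).mulVec v k = (divMat N p₂ g₂ h).mulVec v (r k) := by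
      simp [Matrix.mulVec, Matrix.submatrix_apply, dotProduct]
    rw [this, hmv]
    rfl

open Polynomial

lemma mem_radical_iff_dvd_pow {F : Type*} [Field F] {p₂ : ℕ} {g₁ g₂ : Polynomial F}
    (hg0 : g₂ ≠ 0) (hdeg : g₂.natDegree ≤ p₂) :
    g₁ ∈ (Ideal.span {g₂}).radical ↔ g₂ ∣ g₁ ^ p₂ := by
  constructor
  · rintro ⟨n, hn⟩
    rw [Ideal.mem_span_singleton] at hn
    classical
    set s := UniqueFactorizationMonoid.normalizedFactors g₂ with hs
    have hprod : Associated s.prod g₂ := UniqueFactorizationMonoid.prod_normalizedFactors hg0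
    have hπ : ∀ π ∈ s, π ∣ g₁ := by
      intro π hπ
      have hprime : Prime π := UniqueFactorizationMonoid.prime_of_normalized_factor π hπ
      have : π ∣ g₁ ^ n :=
        dvd_trans (UniqueFactorizationMonoid.dvd_of_mem_normalizedFactors hπ) hn
      exact hprime.dvd_of_dvd_pow this
    have hcard : Multiset.card s ≤ p₂ := by
      have hne : (0 : Polynomial F) ∉ s := fun h0 =>
        (UniqueFactorizationMonoid.prime_of_normalized_factor 0 h0).ne_zero rfl
      have hdegprod : s.prod.natDegree = g₂.natDegree := by
        obtain ⟨u, hu⟩ := hprod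
        have hu0 : (u : Polynomial F) ≠ 0 := u.ne_zero
        have hs0 : s.prod ≠ 0 := fun hz => hg0 (by rw [← hu, hz, zero_mul])
        rw [← hu, Polynomial.natDegree_mul hs0 hu0,
          Polynomial.natDegree_eq_zero_of_isUnit u.isUnit, add_zero]
      have hsum : Multiset.card s ≤ (s.map Polynomial.natDegree).sum := by
        have : ∀ d ∈ s.map Polynomial.natDegree, 1 ≤ d := by
          intro d hd
          obtain ⟨π, hπs, rfl⟩ := Multiset.mem_map.mp hd
          exact (UniqueFactorizationMonoid.irreducible_of_normalized_factor π hπs).natDegree_pos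
        calc Multiset.card s = Multiset.card (s.map Polynomial.natDegree) • 1 := by simp
        _ ≤ (s.map Polynomial.natDegree).sum := Multiset.card_nsmul_le_sum this
      rw [← Polynomial.natDegree_multiset_prod s hne, hdegprod] at hsum
      omega
    have hdvd1 : s.prod ∣ g₁ ^ (Multiset.card s) := by
      have h2 : (s.map (fun x : Polynomial F => x)).prod ∣ (s.map (fun _ => g₁)).prod :=
        Multiset.prod_dvd_prod_of_dvd _ _ (fun a ha => hπ a ha)
      simpa [Multiset.map_id', Multiset.map_const', Multiset.prod_replicate] using h2
    exact dvd_trans (dvd_trans hprod.symm.dvd hdvd1) (pow_dvd_pow g₁ hcard)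
  · intro hdvd
    exact ⟨p₂, Ideal.mem_span_singleton.mpr hdvd⟩

open Polynomial

lemma auxPoly_map {R S : Type*} [CommRing R] [CommRing S] (f : R →+* S) {n : ℕ}
    (c : Fin (n + 1) → R) :
    (auxPoly c).map f = auxPoly (fun i => f (c i)) := by
  simp [auxPoly, Polynomial.map_sum]

lemma divMat_map {R S : Type*} [CommRing R] [CommRing S] (f : R →+* S) (N p₂ : ℕ)
    (g₂ h : Polynomial R) :
    (divMat N p₂ g₂ h).map f = divMat N p₂ (g₂.map f) (h.map f) := by
  funext i j
  simp only [Matrix.map_apply, divMat]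
  split_ifs
  · rw [← Polynomial.coeff_map, Polynomial.map_mul, Polynomial.map_pow, Polynomial.map_X]
  · rw [Polynomial.coeff_map]

lemma polyOfCoeffs_eq_auxPoly {F : Type*} [Field F] {p : ℕ} (c : Fin (p + 1) → F) :
    polyOfCoeffs c = auxPoly c := rfl

/-- Over a field `F`, the subset of pairs `(g₁, g₂) ∈ F[x]_{≤p₁} × F[x]_{≤p₂}`
(identified with the affine space of coefficient tuples) such that `g₂ ≠ 0` and
`g₁` does not belong to the radical of the ideal `(g₂)` is Zariski open, and it
is non-empty when `p₂ ≥ 1`. -/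
theorem notMem_radical_open_nonempty (F : Type*) [Field F] (p₁ p₂ : ℕ) :
    @IsOpen ((Fin (p₁ + 1) ⊕ Fin (p₂ + 1)) → F)
      (affineZariskiTopology _ F)
      {c | polyOfCoeffs (fun i => c (Sum.inr i)) ≠ 0 ∧
        polyOfCoeffs (fun i => c (Sum.inl i)) ∉
          (Ideal.span {polyOfCoeffs (fun i => c (Sum.inr i))}).radical} ∧
    (1 ≤ p₂ →
      {c : (Fin (p₁ + 1) ⊕ Fin (p₂ + 1)) → F |
        polyOfCoeffs (fun i => c (Sum.inr i)) ≠ 0 ∧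
        polyOfCoeffs (fun i => c (Sum.inl i)) ∉
          (Ideal.span {polyOfCoeffs (fun i => c (Sum.inr i))}).radical}.Nonempty) := by
  classical
  set σ := (Fin (p₁ + 1) ⊕ Fin (p₂ + 1))
  set N := p₂ * p₁ with hN
  -- generic polynomials over the polynomial ring in the coordinates
  set G₁ : Polynomial (MvPolynomial σ F) :=
    auxPoly (fun i : Fin (p₁ + 1) => MvPolynomial.X (Sum.inl i)) with hG₁
  set G₂ : Polynomial (MvPolynomial σ F) :=
    auxPoly (fun i : Fin (p₂ + 1) => MvPolynomial.X (Sum.inr i)) with hG₂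
  set M : Matrix (Fin (N + p₂ + 1)) (Fin (N + 2)) (MvPolynomial σ F) :=
    divMat N p₂ G₂ (G₁ ^ p₂) with hM
  constructor
  · -- openness
    refine TopologicalSpace.isOpen_generateFrom_of_mem ?_
    refine ⟨Set.range (fun r : Fin (N + 2) → Fin (N + p₂ + 1) => ((M.submatrix r id).det)), ?_⟩
    ext c
    simp only [Set.mem_compl_iff, Set.mem_setOf_eq, Set.forall_mem_range]
    -- abbreviations for the evaluated polynomials
    set g₁ : Polynomial F := polyOfCoeffs (fun i => c (Sum.inl i)) with hg₁
    set g₂ : Polynomial F := polyOfCoeffs (fun i => c (Sum.inr i)) with hg₂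
    have hmap₁ : G₁.map (MvPolynomial.eval c) = g₁ := by
      rw [hG₁, auxPoly_map, hg₁, polyOfCoeffs_eq_auxPoly]
      simp
    have hmap₂ : G₂.map (MvPolynomial.eval c) = g₂ := by
      rw [hG₂, auxPoly_map, hg₂, polyOfCoeffs_eq_auxPoly]
      simp
    have hMmap : M.map (MvPolynomial.eval c) = divMat N p₂ g₂ (g₁ ^ p₂) := by
      rw [hM, divMat_map, hmap₂, Polynomial.map_pow, hmap₁]
    have hdeg₂ : g₂.natDegree ≤ p₂ := by
      rw [hg₂, polyOfCoeffs_eq_auxPoly]; exact auxPoly_natDegree_le _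
    have hdegh : (g₁ ^ p₂).natDegree ≤ N := by
      refine (Polynomial.natDegree_pow_le).trans ?_
      rw [hN]
      have : g₁.natDegree ≤ p₁ := by
        rw [hg₁, polyOfCoeffs_eq_auxPoly]; exact auxPoly_natDegree_le _
      exact Nat.mul_le_mul_left p₂ this
    have hdets : (∀ r : Fin (N + 2) → Fin (N + p₂ + 1),
        MvPolynomial.eval c ((M.submatrix r id).det) = 0)
        ↔ (g₂ = 0 ∨ g₂ ∣ g₁ ^ p₂) := by
      rw [← divMat_det_iff N p₂ hdeg₂ hdegh]
      refine forall_congr' fun r => ?_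
      rw [RingHom.map_det, RingHom.mapMatrix_apply]
      have : (M.submatrix r id).map (MvPolynomial.eval c)
          = (divMat N p₂ g₂ (g₁ ^ p₂)).submatrix r id := by
        rw [← hMmap]; rfl
      rw [this]
    rw [hdets]
    constructor
    · intro hnot
      by_cases h0 : g₂ = 0
      · exact Or.inl h0
      · refine Or.inr ?_
        rw [← mem_radical_iff_dvd_pow h0 hdeg₂]
        by_contra hmem
        exact hnot ⟨h0, hmem⟩
    · rintro (h0 | hdvd) ⟨hne, hmem⟩
      · exact hne h0
      · exact hmem ((mem_radical_iff_dvd_pow hne hdeg₂).mpr hdvd)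
  · -- nonemptiness
    intro hp₂
    refine ⟨Sum.elim (fun i : Fin (p₁ + 1) => if (i : ℕ) = 0 then (1:F) else 0)
      (fun i : Fin (p₂ + 1) => if (i : ℕ) = 1 then 1 else 0), ?_, ?_⟩ <;>
      simp only [Set.mem_setOf_eq, Sum.elim_inl, Sum.elim_inr]
    all_goals
      have hcg₂ : polyOfCoeffs (fun i : Fin (p₂ + 1) => if (i : ℕ) = 1 then (1:F) else 0)
          = Polynomial.X := by
        unfold polyOfCoeffs
        rw [Finset.sum_eq_single (⟨1, by omega⟩ : Fin (p₂ + 1))]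
        · simp
        · intro i _ hne
          have : (i : ℕ) ≠ 1 := fun h => hne (Fin.ext h)
          simp [this]
        · simp
    · rw [hcg₂]
      exact Polynomial.X_ne_zero
    · have hcg₁ : polyOfCoeffs (fun i : Fin (p₁ + 1) => if (i : ℕ) = 0 then (1:F) else 0)
          = 1 := by
        unfold polyOfCoeffs
        rw [Finset.sum_eq_single (0 : Fin (p₁ + 1))]
        · simp
        · intro i _ hne
          have : (i : ℕ) ≠ 0 := fun h => hne (Fin.ext h)
          simp [this]
        · simp
      rw [hcg₁, hcg₂]
      rintro ⟨n, hn⟩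
      rw [one_pow, Ideal.mem_span_singleton] at hn
      exact Polynomial.not_isUnit_X (isUnit_of_dvd_one hn)
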